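/- arXiv:1202.1928 — 7 statements merged into one kernel-verified Lean document; each statement's English description precedes it below -/
import Mathlib

section
/- Assume each L_k > 0, let G : X → ℝ be d_L-short, let O ⊆ X, and let k ∈ {1,…,K}. Then D̂_k[X, G|_O, d_L] = sup{ D_k[g] : g ∈ E(X, G|_O, d_L) }, where both suprema are taken in the extended real numbers [0, ∞]. -/
open scoped ENNReal

/-- With `d_L(x, x') = ∑ j, L j * d j (x j) (x' j)`, each `L k > 0`,
`G : X → ℝ` `d_L`-short, `O ⊆ X` and `k ∈ {1, …, K}`, the quantity
`D̂_k[X, G|_O, d_L]` (the supremum, in `[0, ∞]`, of `|y − y'|` over all `(x, y), (x', y')`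
with `x` and `x'` differing only in coordinate `k`, `|y − y'| ≤ L k * d k (x k) (x' k)`, and
`|y − G z| ≤ d_L(x, z)`, `|y' − G z| ≤ d_L(x', z)` for all `z ∈ O`) equals the supremum,
in `[0, ∞]`, of the McDiarmid subdiameters `D_k[g]` over all `d_L`-short functions
`g : X → ℝ` with `g = G` on `O`. -/
theorem Dhat_eq_sup_subdiameter_over_extensions
    {K : ℕ} {X : Fin K → Type*} [∀ k, MetricSpace (X k)]
    (L : Fin K → ℝ) (hL : ∀ k, 0 < L k)
    (G : (∀ j, X j) → ℝ)
    (hG : ∀ x x' : ∀ j, X j, |G x - G x'| ≤ ∑ j, L j * dist (x j) (x' j))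
    (O : Set (∀ j, X j)) (k : Fin K) :
    (⨆ (x : ∀ j, X j) (x' : ∀ j, X j) (y : ℝ) (y' : ℝ)
        (_ : (∀ j, j ≠ k → x j = x' j) ∧
             |y - y'| ≤ L k * dist (x k) (x' k) ∧
             (∀ z ∈ O, |y - G z| ≤ ∑ j, L j * dist (x j) (z j)) ∧
             (∀ z ∈ O, |y' - G z| ≤ ∑ j, L j * dist (x' j) (z j))),
        ENNReal.ofReal |y - y'|) =
      (⨆ (g : (∀ j, X j) → ℝ)
          (_ : (∀ x x' : ∀ j, X j, |g x - g x'| ≤ ∑ j, L j * dist (x j) (x' j)) ∧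
               (∀ z ∈ O, g z = G z)),
        ⨆ (x : ∀ j, X j) (x' : ∀ j, X j) (_ : ∀ j, j ≠ k → x j = x' j),
          ENNReal.ofReal |g x - g x'|) := by
  classical
  set d : (∀ j, X j) → (∀ j, X j) → ℝ := fun a b => ∑ j, L j * dist (a j) (b j) with hd
  have d_nonneg : ∀ a b, 0 ≤ d a b := fun a b =>
    Finset.sum_nonneg fun j _ => mul_nonneg (hL j).le dist_nonneg
  have d_symm : ∀ a b, d a b = d b a := fun a b =>
    Finset.sum_congr rfl fun j _ => by rw [dist_comm]
  have d_tri : ∀ a b c, d a c ≤ d a b + d b c := by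
    intro a b c
    rw [hd]
    simp only
    rw [← Finset.sum_add_distrib]
    refine Finset.sum_le_sum fun j _ => ?_
    rw [← mul_add]
    exact mul_le_mul_of_nonneg_left (dist_triangle _ _ _) (hL j).le
  have d_self : ∀ a, d a a = 0 := fun a => by simp [hd]
  have d_single : ∀ a b : ∀ j, X j, (∀ j, j ≠ k → a j = b j) →
      d a b = L k * dist (a k) (b k) := by
    intro a b hab
    rw [hd]
    simp only
    rw [Finset.sum_eq_single k]
    · intro j _ hj
      rw [hab j hj, dist_self, mul_zero]
    · intro h; exact absurd (Finset.mem_univ k) h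
  apply le_antisymm
  · refine iSup_le fun x => iSup_le fun x' => iSup_le fun y => iSup_le fun y' =>
      iSup_le fun h => ?_
    obtain ⟨hxx', hyy', hy, hy'⟩ := h
    set S : Set ((∀ j, X j) × ℝ) :=
      {p | (p.1 ∈ O ∧ p.2 = G p.1) ∨ p = (x, y) ∨ p = (x', y')} with hS
    have hxS : ((x, y) : (∀ j, X j) × ℝ) ∈ S := Or.inr (Or.inl rfl)
    have hx'S : ((x', y') : (∀ j, X j) × ℝ) ∈ S := Or.inr (Or.inr rfl)
    have hdxx' : d x x' = L k * dist (x k) (x' k) := d_single x x' hxx'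
    have key : ∀ p ∈ S, ∀ q ∈ S, p.2 - q.2 ≤ d p.1 q.1 := by
      rintro p hp q hq
      rcases hp with ⟨hpO, hpv⟩ | hp | hp <;> rcases hq with ⟨hqO, hqv⟩ | hq | hq
      · rw [hpv, hqv]
        exact le_trans (le_abs_self _) (hG p.1 q.1)
      · subst hq
        rw [hpv]
        calc G p.1 - y ≤ |y - G p.1| := by rw [abs_sub_comm]; exact le_abs_self _
        _ ≤ d x p.1 := hy p.1 hpO
        _ = d p.1 x := d_symm _ _
      · subst hq
        rw [hpv]
        calc G p.1 - y' ≤ |y' - G p.1| := by rw [abs_sub_comm]; exact le_abs_self _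
        _ ≤ d x' p.1 := hy' p.1 hpO
        _ = d p.1 x' := d_symm _ _
      · subst hp; rw [hqv]
        exact le_trans (le_abs_self _) (hy q.1 hqO)
      · subst hp; subst hq; simp [d_nonneg]
      · subst hp; subst hq
        exact le_trans (le_trans (le_abs_self _) hyy') hdxx'.ge
      · subst hp; rw [hqv]
        exact le_trans (le_abs_self _) (hy' q.1 hqO)
      · subst hp; subst hq
        calc y' - y ≤ |y - y'| := by rw [abs_sub_comm]; exact le_abs_self _
        _ ≤ d x x' := hdxx'.ge.trans' hyy'
        _ = d x' x := d_symm _ _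
      · subst hp; subst hq; simp [d_nonneg]
    set g : (∀ j, X j) → ℝ := fun w => sInf ((fun p : (∀ j, X j) × ℝ => p.2 + d w p.1) '' S)
      with hg
    have hne : ∀ w, ((fun p : (∀ j, X j) × ℝ => p.2 + d w p.1) '' S).Nonempty :=
      fun w => ⟨_, ⟨(x, y), hxS, rfl⟩⟩
    have hbdd : ∀ w, BddBelow ((fun p : (∀ j, X j) × ℝ => p.2 + d w p.1) '' S) := by
      intro w
      refine ⟨y - d x w, ?_⟩
      rintro v ⟨p, hp, rfl⟩
      dsimp only
      have h1 : y - p.2 ≤ d x p.1 := key _ hxS p hp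
      have h2 : d x p.1 ≤ d x w + d w p.1 := d_tri _ _ _
      linarith
    have g_le : ∀ w, ∀ p ∈ S, g w ≤ p.2 + d w p.1 := fun w p hp =>
      csInf_le (hbdd w) ⟨p, hp, rfl⟩
    have le_g : ∀ w c, (∀ p ∈ S, c ≤ p.2 + d w p.1) → c ≤ g w := by
      intro w c hc
      refine le_csInf (hne w) ?_
      rintro v ⟨p, hp, rfl⟩
      exact hc p hp
    have g_eq : ∀ p ∈ S, g p.1 = p.2 := by
      intro p hp
      refine le_antisymm ?_ ?_
      · have := g_le p.1 p hp
        rwa [d_self, add_zero] at this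
      · refine le_g p.1 p.2 fun q hq => ?_
        have := key p hp q hq
        linarith
    have g_short : ∀ w w', |g w - g w'| ≤ d w w' := by
      have aux : ∀ w w', g w - g w' ≤ d w w' := by
        intro w w'
        have : g w - d w w' ≤ g w' := by
          refine le_g w' _ fun p hp => ?_
          have h1 : g w ≤ p.2 + d w p.1 := g_le w p hp
          have h2 : d w p.1 ≤ d w w' + d w' p.1 := d_tri _ _ _
          linarith
        linarith
      intro w w'
      rw [abs_sub_le_iff]
      exact ⟨aux w w', (d_symm w w' ▸ aux w' w : g w' - g w ≤ d w w')⟩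
    have hgx : g x = y := g_eq (x, y) hxS
    have hgx' : g x' = y' := g_eq (x', y') hx'S
    have hprop : (∀ a b : ∀ j, X j, |g a - g b| ≤ ∑ j, L j * dist (a j) (b j)) ∧
        (∀ z ∈ O, g z = G z) :=
      ⟨fun a b => g_short a b, fun z hz => g_eq (z, G z) (Or.inl ⟨hz, rfl⟩)⟩
    calc ENNReal.ofReal |y - y'| = ENNReal.ofReal |g x - g x'| := by rw [hgx, hgx']
    _ ≤ _ := by
        refine le_iSup_of_le g (le_iSup_of_le hprop (le_iSup_of_le x (le_iSup_of_le x'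
          (le_iSup_of_le hxx' le_rfl))))
  · refine iSup_le fun g => iSup_le fun hg => iSup_le fun x => iSup_le fun x' =>
      iSup_le fun hxx' => ?_
    refine le_iSup_of_le x (le_iSup_of_le x' (le_iSup_of_le (g x) (le_iSup_of_le (g x')
      (le_iSup_of_le ?_ le_rfl))))
    refine ⟨hxx', ?_, ?_, ?_⟩
    · rw [← d_single x x' hxx']
      exact hg.1 x x'
    · intro z hz
      rw [← hg.2 z hz]
      exact hg.1 x z
    · intro z hz
      rw [← hg.2 z hz]
      exact hg.1 x' z
end

section
/- Assume each L_k > 0, let G : X → ℝ be d_L-short, let O ⊆ X be nonempty, and suppose the gap size Γ(X, O, d_L) is finite. Then for every k ∈ {1,…,K}, D_k[G] ≤ D̂_k[X, G|_O, d_L] ≤ D_k[G] + 4 Γ(X, O, d_L). -/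
open scoped ENNReal

/-- Error bound for `D̂_k`: with each `L k > 0`, `G : X → ℝ` `d_L`-short,
`O ⊆ X` nonempty, and finite gap size `Γ(X, O, d_L) = sup_{x ∈ X} inf_{z ∈ O} d_L(x, z)`,
for every `k` one has `D_k[G] ≤ D̂_k[X, G|_O, d_L] ≤ D_k[G] + 4 Γ(X, O, d_L)`, where all
quantities are taken in the extended nonnegative reals `[0, ∞]`. -/
theorem Dhat_error_bound
    {K : ℕ} {X : Fin K → Type*} [∀ k, MetricSpace (X k)]
    (L : Fin K → ℝ) (hL : ∀ k, 0 < L k)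
    (G : (∀ j, X j) → ℝ)
    (hG : ∀ x x' : ∀ j, X j, |G x - G x'| ≤ ∑ j, L j * dist (x j) (x' j))
    (O : Set (∀ j, X j)) (hO : O.Nonempty)
    (Γ : ℝ≥0∞)
    (hΓdef : Γ = ⨆ x : ∀ j, X j, ⨅ z : O,
        ENNReal.ofReal (∑ j, L j * dist (x j) ((z : ∀ j, X j) j)))
    (hΓfin : Γ ≠ ∞)
    (k : Fin K)
    (Dk : ℝ≥0∞)
    (hDkdef : Dk = ⨆ (x : ∀ j, X j) (x' : ∀ j, X j) (_ : ∀ j, j ≠ k → x j = x' j),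
        ENNReal.ofReal |G x - G x'|)
    (Dhat : ℝ≥0∞)
    (hDhatdef : Dhat = ⨆ (x : ∀ j, X j) (x' : ∀ j, X j) (y : ℝ) (y' : ℝ)
        (_ : (∀ j, j ≠ k → x j = x' j) ∧
             |y - y'| ≤ L k * dist (x k) (x' k) ∧
             (∀ z ∈ O, |y - G z| ≤ ∑ j, L j * dist (x j) (z j)) ∧
             (∀ z ∈ O, |y' - G z| ≤ ∑ j, L j * dist (x' j) (z j))),
        ENNReal.ofReal |y - y'|) :
    Dk ≤ Dhat ∧ Dhat ≤ Dk + 4 * Γ := by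
  have hOne : Nonempty O := hO.to_subtype
  have sum_nonneg : ∀ (a b : ∀ j, X j), 0 ≤ ∑ j, L j * dist (a j) (b j) := fun a b =>
    Finset.sum_nonneg fun j _ => mul_nonneg (hL j).le dist_nonneg
  constructor
  · rw [hDkdef, hDhatdef]
    refine iSup_le fun x => iSup_le fun x' => iSup_le fun h => ?_
    have hsum : ∑ j, L j * dist (x j) (x' j) = L k * dist (x k) (x' k) := by
      refine Finset.sum_eq_single k (fun j _ hj => ?_) (fun hk => absurd (Finset.mem_univ k) hk)
      rw [h j hj, dist_self, mul_zero]
    have h2 : |G x - G x'| ≤ L k * dist (x k) (x' k) := hsum ▸ hG x x'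
    exact le_iSup_of_le x (le_iSup_of_le x' (le_iSup_of_le (G x) (le_iSup_of_le (G x')
      (le_iSup_of_le ⟨h, h2, fun z _ => hG x z, fun z _ => hG x' z⟩ le_rfl))))
  · rw [hDhatdef]
    refine iSup_le fun x => iSup_le fun x' => iSup_le fun y => iSup_le fun y' =>
      iSup_le fun ⟨hxx', _, hy, hy'⟩ => ?_
    -- key pointwise bound
    have key : ∀ z z' : O, ENNReal.ofReal |y - y'| ≤
        Dk + (2 * ENNReal.ofReal (∑ j, L j * dist (x j) ((z : ∀ j, X j) j))
            + 2 * ENNReal.ofReal (∑ j, L j * dist (x' j) ((z' : ∀ j, X j) j))) := by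
      rintro ⟨zv, hz⟩ ⟨z'v, hz'⟩
      set w : ∀ j, X j := Function.update zv k (z'v k) with hw
      have hwk : w k = z'v k := Function.update_self k (z'v k) zv
      have hwj : ∀ j, j ≠ k → w j = zv j := fun j hj => Function.update_of_ne hj _ _
      set S := ∑ j, L j * dist (x j) (zv j) with hS
      set S' := ∑ j, L j * dist (x' j) (z'v j) with hS'
      have hmid : ∑ j, L j * dist (w j) (z'v j) ≤ S + S' := by
        rw [hS, hS', ← Finset.sum_add_distrib]
        refine Finset.sum_le_sum fun j _ => ?_
        by_cases hj : j = k
        · subst hj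
          rw [hwk, dist_self, mul_zero]
          exact add_nonneg (mul_nonneg (hL _).le dist_nonneg) (mul_nonneg (hL _).le dist_nonneg)
        · rw [hwj j hj]
          calc L j * dist (zv j) (z'v j)
              ≤ L j * (dist (zv j) (x j) + dist (x j) (z'v j)) := by
                exact mul_le_mul_of_nonneg_left (dist_triangle _ _ _) (hL j).le
            _ = L j * dist (x j) (zv j) + L j * dist (x' j) (z'v j) := by
                rw [dist_comm (zv j), ← hxx' j hj, mul_add]
      have hreal : |y - y'| ≤ 2 * S + 2 * S' + |G zv - G w| := by
        have h1 : |y - y'| ≤ |y - G zv| + |G zv - G w| + |G w - G z'v| + |G z'v - y'| := by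
          calc |y - y'| = |(y - G zv) + (G zv - G w) + (G w - G z'v) + (G z'v - y')| := by
                ring_nf
            _ ≤ |y - G zv| + |G zv - G w| + |G w - G z'v| + |G z'v - y'| := by
                exact (abs_add_le _ _).trans (add_le_add_left ((abs_add_le _ _).trans
                  (add_le_add_left (abs_add_le _ _) _)) _)
        have h2 : |y - G zv| ≤ S := hy zv hz
        have h3 : |G w - G z'v| ≤ S + S' := (hG w z'v).trans hmid
        have h4 : |G z'v - y'| ≤ S' := by rw [abs_sub_comm]; exact hy' z'v hz'
        nlinarith [h1, h2, h3, h4]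
      have hDle : ENNReal.ofReal |G zv - G w| ≤ Dk := by
        rw [hDkdef]
        exact le_iSup_of_le zv (le_iSup_of_le w
          (le_iSup_of_le (fun j hj => (hwj j hj).symm) le_rfl))
      calc ENNReal.ofReal |y - y'|
          ≤ ENNReal.ofReal (2 * S + 2 * S' + |G zv - G w|) := ENNReal.ofReal_le_ofReal hreal
        _ ≤ ENNReal.ofReal (2 * S) + ENNReal.ofReal (2 * S') + ENNReal.ofReal |G zv - G w| := by
            exact (ENNReal.ofReal_add_le).trans (add_le_add_left ENNReal.ofReal_add_le _)
        _ = 2 * ENNReal.ofReal S + 2 * ENNReal.ofReal S' + ENNReal.ofReal |G zv - G w| := by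
            rw [ENNReal.ofReal_mul (by norm_num), ENNReal.ofReal_mul (by norm_num),
              ENNReal.ofReal_ofNat]
        _ ≤ 2 * ENNReal.ofReal S + 2 * ENNReal.ofReal S' + Dk := add_le_add_right hDle _
        _ = Dk + (2 * ENNReal.ofReal S + 2 * ENNReal.ofReal S') := by ring
    -- pass to infima
    have hA : (⨅ z : O, ENNReal.ofReal (∑ j, L j * dist (x j) ((z : ∀ j, X j) j))) ≤ Γ := by
      rw [hΓdef]; exact le_iSup_of_le x le_rfl
    have hB : (⨅ z : O, ENNReal.ofReal (∑ j, L j * dist (x' j) ((z : ∀ j, X j) j))) ≤ Γ := by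
      rw [hΓdef]; exact le_iSup_of_le x' le_rfl
    have h2ne : (2 : ℝ≥0∞) ≠ 0 := by norm_num
    have h2nt : (2 : ℝ≥0∞) ≠ ∞ := by norm_num
    have step : ENNReal.ofReal |y - y'| ≤
        Dk + (2 * (⨅ z : O, ENNReal.ofReal (∑ j, L j * dist (x j) ((z : ∀ j, X j) j)))
            + 2 * (⨅ z : O, ENNReal.ofReal (∑ j, L j * dist (x' j) ((z : ∀ j, X j) j)))) := by
      rw [ENNReal.mul_iInf_of_ne h2ne h2nt, ENNReal.mul_iInf_of_ne h2ne h2nt,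
        ENNReal.iInf_add, ENNReal.add_iInf]
      refine le_iInf fun z => ?_
      rw [ENNReal.add_iInf, ENNReal.add_iInf]
      exact le_iInf fun z' => key z z'
    calc ENNReal.ofReal |y - y'|
        ≤ Dk + (2 * Γ + 2 * Γ) := step.trans (add_le_add_right
          (add_le_add (mul_le_mul_right hA 2) (mul_le_mul_right hB 2)) Dk)
      _ = Dk + 4 * Γ := by ring
end

section
/- Let R > 0 and m ∈ ℝ, and write t₊ := max(t, 0) for t ∈ ℝ. Then the supremum of μ((−∞, 0]) over all Borel probability measures μ on ℝ such that the support of μ is contained in some closed interval of length at most R and ∫_ℝ y dμ(y) ≥ m, equals (1 − m₊/R)₊. -/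
open MeasureTheory
open scoped ENNReal

/-- For `R > 0` and `m ∈ ℝ`, the supremum of `μ((−∞, 0])` over all Borel
probability measures `μ` on `ℝ` whose support is contained in some closed interval of
length at most `R` and whose mean satisfies `∫ y dμ(y) ≥ m` equals `(1 − m₊/R)₊`,
where `t₊ = max t 0`. -/
theorem sup_prob_nonpos_bounded_support_mean
    (R : ℝ) (hR : 0 < R) (m : ℝ) :
    (⨆ μ : {μ : Measure ℝ // IsProbabilityMeasure μ ∧
        (∃ a b : ℝ, b - a ≤ R ∧ μ (Set.Icc a b)ᶜ = 0) ∧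
        m ≤ ∫ y, y ∂μ},
      (μ : Measure ℝ) (Set.Iic (0 : ℝ))) =
    ENNReal.ofReal (max (1 - max m 0 / R) 0) := by
  set m' := max m 0 with hm'
  have hm'0 : (0:ℝ) ≤ m' := le_max_right _ _
  apply le_antisymm
  · -- Upper bound
    apply iSup_le
    rintro ⟨μ, hprob, ⟨a, b, hba, hsupp⟩, hmean⟩
    simp only
    by_cases hm0 : m ≤ 0
    · -- target is 1
      have hmax : m' = 0 := max_eq_right hm0
      have : max (1 - m' / R) 0 = 1 := by rw [hmax]; norm_num
      rw [this, ENNReal.ofReal_one]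
      exact prob_le_one
    push_neg at hm0
    have hmax : m' = m := max_eq_left hm0.le
    by_cases ha : 0 < a
    · -- support above 0
      have hsub : Set.Iic (0:ℝ) ⊆ (Set.Icc a b)ᶜ := by
        intro y hy
        simp only [Set.mem_compl_iff, Set.mem_Icc, not_and]
        intro hya
        exact absurd (hya.trans hy) (not_le.mpr ha)
      calc μ (Set.Iic 0) ≤ μ ((Set.Icc a b)ᶜ) := measure_mono hsub
        _ = 0 := hsupp
        _ ≤ _ := zero_le
    push_neg at ha
    have hab : a ≤ b := by
      by_contra hlt
      push_neg at hlt
      rw [Set.Icc_eq_empty (not_le.mpr hlt), Set.compl_empty] at hsupp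
      simp [hprob.measure_univ] at hsupp
    have hbR : b ≤ R := by linarith
    have hae : ∀ᵐ y ∂μ, y ∈ Set.Icc a b := by
      rw [MeasureTheory.ae_iff]
      exact hsupp
    have hint : Integrable (fun y : ℝ => y) μ := by
      refine Integrable.mono' (integrable_const (max |a| |b|))
        measurable_id.aestronglyMeasurable (hae.mono fun y hy => ?_)
      rw [Real.norm_eq_abs]
      rcases abs_cases y with ⟨h1, _⟩ | ⟨h1, _⟩
      · rw [h1]; exact le_max_of_le_right ((le_abs_self b).trans' hy.2)
      · rw [h1]; exact le_max_of_le_left ((neg_le_abs a).trans' (neg_le_neg hy.1))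
    have hint2 : Integrable ((Set.Ioi (0:ℝ)).indicator fun _ => R) μ :=
      (integrable_const R).indicator measurableSet_Ioi
    have h1 : ∫ y, y ∂μ ≤ ∫ y, (Set.Ioi (0:ℝ)).indicator (fun _ => R) y ∂μ := by
      refine integral_mono_ae hint hint2 (hae.mono fun y hy => ?_)
      by_cases hy0 : 0 < y
      · rw [Set.indicator_of_mem (Set.mem_Ioi.mpr hy0)]
        exact hy.2.trans hbR
      · rw [Set.indicator_of_notMem (by simpa using hy0)]
        exact le_of_not_gt hy0
    rw [integral_indicator_const _ measurableSet_Ioi, smul_eq_mul] at h1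
    have hfin : μ (Set.Iic (0:ℝ)) ≠ ⊤ := measure_ne_top μ _
    have hfin2 : μ (Set.Ioi (0:ℝ)) ≠ ⊤ := measure_ne_top μ _
    have hsum : μ (Set.Iic (0:ℝ)) + μ (Set.Ioi (0:ℝ)) = 1 := by
      rw [← measure_union (Set.Iic_disjoint_Ioi le_rfl) measurableSet_Ioi,
        Set.Iic_union_Ioi, measure_univ]
    set p := (μ (Set.Iic (0:ℝ))).toReal with hp
    set q := (μ (Set.Ioi (0:ℝ))).toReal with hq
    have hpq : p + q = 1 := by
      rw [hp, hq, ← ENNReal.toReal_add hfin hfin2, hsum, ENNReal.toReal_one]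
    have hqm : m ≤ q * R := by
      calc m ≤ ∫ y, y ∂μ := hmean
        _ ≤ q * R := h1
    have hple : p ≤ 1 - m / R := by
      have : m / R ≤ q := (div_le_iff₀ hR).mpr hqm
      linarith
    calc μ (Set.Iic (0:ℝ)) = ENNReal.ofReal p := (ENNReal.ofReal_toReal hfin).symm
      _ ≤ ENNReal.ofReal (max (1 - m' / R) 0) := by
          apply ENNReal.ofReal_le_ofReal
          rw [hmax]
          exact le_max_of_le_left hple
  · -- Lower bound
    by_cases hmR : m' < R
    · have hc1 : (0:ℝ) ≤ 1 - m' / R := by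
        have : m' / R ≤ 1 := (div_le_one hR).mpr hmR.le
        linarith
      have hc2 : (0:ℝ) ≤ m' / R := div_nonneg hm'0 hR.le
      set μ : Measure ℝ := ENNReal.ofReal (1 - m' / R) • Measure.dirac 0
        + ENNReal.ofReal (m' / R) • Measure.dirac R with hμ
      have hprob : IsProbabilityMeasure μ := by
        constructor
        rw [hμ]
        simp only [Measure.add_apply, Measure.smul_apply, smul_eq_mul,
          measure_univ, mul_one]
        rw [← ENNReal.ofReal_add hc1 hc2]
        norm_num
      have hsupp : μ (Set.Icc (0:ℝ) R)ᶜ = 0 := by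
        rw [hμ]
        simp only [Measure.add_apply, Measure.smul_apply, smul_eq_mul]
        rw [Measure.dirac_apply' _ measurableSet_Icc.compl,
          Measure.dirac_apply' _ measurableSet_Icc.compl]
        rw [Set.indicator_of_notMem, Set.indicator_of_notMem] <;>
          simp [hR.le, le_refl, hR]
      have hintd : ∀ c : ℝ, Integrable (fun y : ℝ => y)
          (Measure.dirac c) := fun c => by
        refine Integrable.mono' (integrable_const |c|)
          measurable_id.aestronglyMeasurable ?_
        rw [MeasureTheory.ae_dirac_eq]
        simp
      have hmean : ∫ y, y ∂μ = m' := by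
        rw [hμ, integral_add_measure ((hintd 0).smul_measure ENNReal.ofReal_ne_top)
          ((hintd R).smul_measure ENNReal.ofReal_ne_top)]
        rw [integral_smul_measure, integral_smul_measure, integral_dirac, integral_dirac]
        rw [ENNReal.toReal_ofReal hc1, ENNReal.toReal_ofReal hc2]
        field_simp
        rw [smul_eq_mul, smul_eq_mul, mul_zero, zero_add, div_mul_cancel₀ _ hR.ne']
      have hval : μ (Set.Iic (0:ℝ)) = ENNReal.ofReal (1 - m' / R) := by
        rw [hμ]
        simp only [Measure.add_apply, Measure.smul_apply, smul_eq_mul]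
        rw [Measure.dirac_apply' _ measurableSet_Iic, Measure.dirac_apply' _ measurableSet_Iic]
        rw [Set.indicator_of_mem (by simp : (0:ℝ) ∈ Set.Iic (0:ℝ)),
          Set.indicator_of_notMem (by simp [hR] : (R:ℝ) ∉ Set.Iic (0:ℝ))]
        simp
      have hmem : IsProbabilityMeasure μ ∧
          (∃ a b : ℝ, b - a ≤ R ∧ μ (Set.Icc a b)ᶜ = 0) ∧ m ≤ ∫ y, y ∂μ :=
        ⟨hprob, ⟨0, R, by linarith, hsupp⟩, by rw [hmean]; exact le_max_left m 0⟩
      have := le_iSup (fun ν : {μ : Measure ℝ // IsProbabilityMeasure μ ∧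
          (∃ a b : ℝ, b - a ≤ R ∧ μ (Set.Icc a b)ᶜ = 0) ∧ m ≤ ∫ y, y ∂μ} =>
          (ν : Measure ℝ) (Set.Iic (0:ℝ))) (⟨μ, hmem⟩ :
          {μ : Measure ℝ // IsProbabilityMeasure μ ∧
          (∃ a b : ℝ, b - a ≤ R ∧ μ (Set.Icc a b)ᶜ = 0) ∧ m ≤ ∫ y, y ∂μ})
      rw [hval] at this
      calc ENNReal.ofReal (max (1 - m' / R) 0)
          = ENNReal.ofReal (1 - m' / R) := by rw [max_eq_left hc1]
        _ ≤ _ := this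
    · push_neg at hmR
      have : max (1 - m' / R) 0 = 0 := by
        apply max_eq_right
        have : (1:ℝ) ≤ m' / R := (one_le_div hR).mpr hmR
        linarith
      rw [this, ENNReal.ofReal_zero]
      exact zero_le
end

section
/- Let L > 0, z ∈ [0, 1/2], γ > 0, and m ∈ ℝ with m ≤ γ + L(1 − z), and write t₊ := max(t, 0). Let P̂ denote the supremum of μ({x ∈ [0,1] : g(x) ≤ 0}) over all pairs (g, μ) where g : [0,1] → ℝ is Lipschitz with constant L and g(z) = γ, μ is a Borel probability measure on [0,1], and ∫ g dμ ≥ m. Then: (i) if γ ≤ L z, then P̂ = (1 − m₊/(L − (L z − γ)))₊; and (ii) if γ > L(1 − z), then P̂ = 0. -/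
open MeasureTheory
open scoped ENNReal

/-- The least upper bound `P̂` on the failure probability `μ(g ≤ 0)` over all pairs
`(g, μ)` where `g : [0,1] → ℝ` is Lipschitz with constant `L` with the single observed
value `g z = γ`, and `μ` is a Borel probability measure on `[0,1]` with `∫ g dμ ≥ m`.
(Functions and measures on `[0,1]` are represented by functions on `ℝ` Lipschitz on
`[0,1]` and measures on `ℝ` supported on `[0,1]`.) -/
noncomputable def PhatOneObs (L z γ m : ℝ) : ℝ≥0∞ :=
  ⨆ p : {p : (ℝ → ℝ) × Measure ℝ //
      IsProbabilityMeasure p.2 ∧ p.2 (Set.Icc (0 : ℝ) 1)ᶜ = 0 ∧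
      (∀ x ∈ Set.Icc (0 : ℝ) 1, ∀ x' ∈ Set.Icc (0 : ℝ) 1,
        |p.1 x - p.1 x'| ≤ L * |x - x'|) ∧
      p.1 z = γ ∧ m ≤ ∫ x, p.1 x ∂p.2},
    p.val.2 {x ∈ Set.Icc (0 : ℝ) 1 | p.val.1 x ≤ 0}

/-- Cases (i) and (v) of the one-data-point example: for `L > 0`,
`z ∈ [0, 1/2]`, `γ > 0`, `m ≤ γ + L(1 − z)`:
(i) if `γ ≤ L z` then `P̂ = (1 − m₊/(L − (L z − γ)))₊`;
(ii) if `γ > L(1 − z)` then `P̂ = 0`. -/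
theorem Phat_one_obs_cases_low_and_impossible
    (L z γ m : ℝ) (hL : 0 < L) (hz : z ∈ Set.Icc (0 : ℝ) (1 / 2))
    (hγ : 0 < γ) (hm : m ≤ γ + L * (1 - z)) :
    (γ ≤ L * z →
      PhatOneObs L z γ m = ENNReal.ofReal (max (1 - max m 0 / (L - (L * z - γ))) 0)) ∧
    (L * (1 - z) < γ → PhatOneObs L z γ m = 0) := by
  obtain ⟨hz0, hz1⟩ := hz
  have hD0 : 0 < γ + L * (1 - z) := by nlinarith
  constructor
  · intro hγz
    set D := γ + L * (1 - z) with hDdef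
    have hDe : L - (L * z - γ) = D := by rw [hDdef]; ring
    have hmD : max m 0 ≤ D := max_le hm hD0.le
    set p := 1 - max m 0 / D with hpdef
    have hp0 : 0 ≤ p := by
      have : max m 0 / D ≤ 1 := (div_le_one hD0).mpr hmD
      simp only [hpdef]; linarith
    have hq0 : 0 ≤ max m 0 / D := div_nonneg (le_max_right _ _) hD0.le
    have hp1 : p ≤ 1 := by simp only [hpdef]; linarith
    rw [hDe, max_eq_left hp0]
    have hzI : z ∈ Set.Icc (0 : ℝ) 1 := ⟨hz0, by linarith⟩
    apply le_antisymm
    · -- Upper bound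
      apply iSup_le
      rintro ⟨⟨g, μ⟩, hprob, hsupp, hlip, hgz, hint⟩
      dsimp only
      set c : ℝ → ℝ := fun x => max (min x 1) 0 with hc
      have hcI : ∀ x, c x ∈ Set.Icc (0 : ℝ) 1 := fun x =>
        ⟨le_max_right _ _, max_le (min_le_right _ _) zero_le_one⟩
      have hcid : ∀ x ∈ Set.Icc (0 : ℝ) 1, c x = x := by
        rintro x ⟨h0, h1⟩
        simp only [hc, min_eq_left h1, max_eq_left h0]
      set h : ℝ → ℝ := fun x => g (c x) with hh
      have hclamp : ∀ x y : ℝ, |c x - c y| ≤ |x - y| := fun x y =>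
        (abs_max_sub_max_le_abs _ _ _).trans
          ((abs_min_sub_min_le_max x 1 y 1).trans
            (by rw [sub_self, abs_zero, max_eq_left (abs_nonneg _)]))
      have hhlip : LipschitzWith (Real.toNNReal L) h :=
        LipschitzWith.of_dist_le_mul fun x y => by
          rw [Real.dist_eq, Real.dist_eq, Real.coe_toNNReal L hL.le]
          exact (hlip _ (hcI x) _ (hcI y)).trans
            (mul_le_mul_of_nonneg_left (hclamp x y) hL.le)
      have hcont : Continuous h := hhlip.continuous
      have hmeas : Measurable h := hcont.measurable
      have haeeq : g =ᵐ[μ] h :=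
        Filter.eventuallyEq_of_mem (mem_ae_iff.mpr hsupp)
          (fun x hx => show g x = g (c x) from (congrArg g (hcid x hx)).symm)
      have hint' : m ≤ ∫ x, h x ∂μ := (integral_congr_ae haeeq) ▸ hint
      have hbd : ∀ x : ℝ, |h x - γ| ≤ L * (1 - z) := fun x => by
        have h1 := hlip (c x) (hcI x) z hzI
        rw [hgz] at h1
        refine h1.trans (mul_le_mul_of_nonneg_left ?_ hL.le)
        have h2 := (hcI x).1; have h3 := (hcI x).2
        rw [abs_le]; constructor <;> linarith
      have hhub : ∀ x : ℝ, h x ≤ D := fun x => by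
        have := (abs_le.mp (hbd x)).2; simp only [hDdef]; linarith
      set A : Set ℝ := Set.Icc (0 : ℝ) 1 ∩ {x | h x ≤ 0} with hAdef
      have hA : MeasurableSet A := measurableSet_Icc.inter (hmeas measurableSet_Iic)
      have hAs : {x ∈ Set.Icc (0 : ℝ) 1 | g x ≤ 0} = A := by
        ext x
        simp only [Set.mem_sep_iff, hAdef, Set.mem_inter_iff, Set.mem_setOf_eq]
        exact and_congr_right fun hx => by
          rw [show h x = g x from congrArg g (hcid x hx)]
      rw [hAs]
      have hintg : Integrable h μ := by
        refine Integrable.mono' (integrable_const (|γ| + L * (1 - z)))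
          hcont.aestronglyMeasurable (Filter.Eventually.of_forall fun x => ?_)
        rw [Real.norm_eq_abs]
        have h1 : |h x| - |γ| ≤ |h x - γ| := abs_sub_abs_le_abs_sub _ _
        have h2 := hbd x
        linarith
      set f : ℝ → ℝ := fun x => D - A.indicator (fun _ => D) x with hf
      have hfint : Integrable f μ :=
        (integrable_const D).sub ((integrable_const D).indicator hA)
      have hle : ∀ x, h x ≤ f x := fun x => by
        by_cases hxA : x ∈ A
        · simp only [hf, Set.indicator_of_mem hxA]
          have := hxA.2
          simp only [Set.mem_setOf_eq] at this
          linarith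
        · simp only [hf, Set.indicator_of_notMem hxA]
          have := hhub x
          linarith
      have hIb : ∫ x, h x ∂μ ≤ ∫ x, f x ∂μ :=
        integral_mono hintg hfint hle
      have hIf : ∫ x, f x ∂μ = D - D * (μ A).toReal := by
        simp only [hf]
        rw [integral_sub (integrable_const D) ((integrable_const D).indicator hA),
          integral_const, integral_indicator_const D hA]
        simp only [Measure.real, measure_univ, ENNReal.toReal_one, smul_eq_mul, one_mul]
        ring
      have hP1 : (μ A).toReal ≤ 1 := by
        simpa using ENNReal.toReal_mono ENNReal.one_ne_top (prob_le_one (μ := μ) (s := A))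
      have hm' : m ≤ D - D * (μ A).toReal := hint'.trans (hIb.trans_eq hIf)
      have h0' : 0 ≤ D - D * (μ A).toReal := by nlinarith
      have hmax : max m 0 ≤ D - D * (μ A).toReal := max_le hm' h0'
      have hPp : (μ A).toReal ≤ p := by
        have hdiv : max m 0 / D ≤ 1 - (μ A).toReal := by
          rw [div_le_iff₀ hD0]; nlinarith
        simp only [hpdef]; linarith
      calc μ A = ENNReal.ofReal (μ A).toReal :=
              (ENNReal.ofReal_toReal (measure_ne_top μ A)).symm
        _ ≤ ENNReal.ofReal p := ENNReal.ofReal_le_ofReal hPp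
    · -- Lower bound
      set a : ℝ := z - γ / L with hadef
      have hdiv0 : 0 ≤ γ / L := div_nonneg hγ.le hL.le
      have haI : a ∈ Set.Icc (0 : ℝ) 1 := by
        constructor
        · have : γ / L ≤ z := by rw [div_le_iff₀ hL]; linarith [hγz]
          simp only [hadef]; linarith
        · simp only [hadef]; linarith
      have h1I : (1 : ℝ) ∈ Set.Icc (0 : ℝ) 1 := ⟨zero_le_one, le_refl _⟩
      set g₀ : ℝ → ℝ := fun x => γ + L * (x - z) with hg0
      have hg0a : g₀ a = 0 := by
        simp only [hg0, hadef]
        field_simp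
        ring
      have hg01 : g₀ 1 = D := by simp only [hg0, hDdef]
      set μ₀ : Measure ℝ :=
        ENNReal.ofReal p • Measure.dirac a + ENNReal.ofReal (1 - p) • Measure.dirac 1
        with hμ0
      have h1p0 : (0 : ℝ) ≤ 1 - p := by linarith
      have hprob : IsProbabilityMeasure μ₀ := by
        constructor
        simp only [hμ0, Measure.coe_add, Pi.add_apply, Measure.smul_apply,
          smul_eq_mul, measure_univ, mul_one]
        rw [← ENNReal.ofReal_add hp0 h1p0]
        norm_num
      have hsupp : μ₀ (Set.Icc (0 : ℝ) 1)ᶜ = 0 := by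
        have hda : Measure.dirac a (Set.Icc (0 : ℝ) 1)ᶜ = 0 := by
          rw [Measure.dirac_apply' _ measurableSet_Icc.compl,
            Set.indicator_of_notMem (Set.notMem_compl_iff.mpr haI)]
        have hd1 : Measure.dirac (1 : ℝ) (Set.Icc (0 : ℝ) 1)ᶜ = 0 := by
          rw [Measure.dirac_apply' _ measurableSet_Icc.compl,
            Set.indicator_of_notMem (Set.notMem_compl_iff.mpr h1I)]
        simp [hμ0, Measure.coe_add, Pi.add_apply, Measure.smul_apply, hda, hd1]
      have hlip : ∀ x ∈ Set.Icc (0 : ℝ) 1, ∀ x' ∈ Set.Icc (0 : ℝ) 1,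
          |g₀ x - g₀ x'| ≤ L * |x - x'| := by
        intro x _ x' _
        have : g₀ x - g₀ x' = L * (x - x') := by simp only [hg0]; ring
        rw [this, abs_mul, abs_of_pos hL]
      have hgz : g₀ z = γ := by simp [hg0]
      have hg0m : Measurable g₀ := by fun_prop
      have hdint : ∀ b : ℝ, Integrable g₀ (Measure.dirac b) := fun b => by
        refine (integrable_const (g₀ b)).congr ?_
        rw [Filter.EventuallyEq, ae_dirac_eq, Filter.eventually_pure]
      have hI : ∫ x, g₀ x ∂μ₀ = max m 0 := by
        rw [hμ0,
          integral_add_measure ((hdint a).smul_measure ENNReal.ofReal_ne_top)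
            ((hdint 1).smul_measure ENNReal.ofReal_ne_top),
          integral_smul_measure, integral_smul_measure,
          integral_dirac, integral_dirac,
          ENNReal.toReal_ofReal hp0, ENNReal.toReal_ofReal h1p0, hg0a, hg01]
        simp only [smul_eq_mul, mul_zero, zero_add, hpdef]
        field_simp
        ring
      have hmint : m ≤ ∫ x, g₀ x ∂μ₀ := hI.symm ▸ le_max_left m 0
      have hSm : MeasurableSet {x ∈ Set.Icc (0 : ℝ) 1 | g₀ x ≤ 0} :=
        measurableSet_Icc.inter (hg0m measurableSet_Iic)
      have haS : a ∈ {x ∈ Set.Icc (0 : ℝ) 1 | g₀ x ≤ 0} := ⟨haI, hg0a.le⟩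
      have h1S : (1 : ℝ) ∉ {x ∈ Set.Icc (0 : ℝ) 1 | g₀ x ≤ 0} := fun hc => by
        have := hc.2
        rw [hg01] at this
        exact absurd this (not_le.mpr hD0)
      have hval : μ₀ {x ∈ Set.Icc (0 : ℝ) 1 | g₀ x ≤ 0} = ENNReal.ofReal p := by
        rw [hμ0]
        simp only [Measure.coe_add, Pi.add_apply, Measure.smul_apply, smul_eq_mul,
          Measure.dirac_apply' _ hSm, Set.indicator_of_mem haS,
          Set.indicator_of_notMem h1S, Pi.one_apply, mul_one, mul_zero, add_zero]
      calc ENNReal.ofReal p = μ₀ {x ∈ Set.Icc (0 : ℝ) 1 | g₀ x ≤ 0} := hval.symm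
        _ ≤ PhatOneObs L z γ m := by
            rw [PhatOneObs]
            exact le_iSup
              (fun q : {p : (ℝ → ℝ) × Measure ℝ //
                  IsProbabilityMeasure p.2 ∧ p.2 (Set.Icc (0 : ℝ) 1)ᶜ = 0 ∧
                  (∀ x ∈ Set.Icc (0 : ℝ) 1, ∀ x' ∈ Set.Icc (0 : ℝ) 1,
                    |p.1 x - p.1 x'| ≤ L * |x - x'|) ∧
                  p.1 z = γ ∧ m ≤ ∫ x, p.1 x ∂p.2} =>
                q.val.2 {x ∈ Set.Icc (0 : ℝ) 1 | q.val.1 x ≤ 0})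
              ⟨⟨g₀, μ₀⟩, hprob, hsupp, hlip, hgz, hmint⟩
  · intro hγbig
    rw [PhatOneObs, ENNReal.iSup_eq_zero]
    rintro ⟨⟨g, μ⟩, hprob, hsupp, hlip, hgz, hint⟩
    dsimp only
    have hempty : {x ∈ Set.Icc (0 : ℝ) 1 | g x ≤ 0} = ∅ := by
      ext x
      simp only [Set.mem_setOf_eq, Set.mem_empty_iff_false, iff_false, not_and, not_le]
      intro hx
      obtain ⟨hx0, hx1⟩ := Set.mem_Icc.mp hx
      have h1 := hlip x hx z ⟨hz0, by linarith⟩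
      rw [hgz] at h1
      have h2 : |x - z| ≤ 1 - z := by
        rw [abs_le]; constructor <;> linarith
      have h3 := (abs_le.mp (h1.trans (mul_le_mul_of_nonneg_left h2 hL.le))).1
      nlinarith
    rw [hempty, measure_empty]
end

section
/- Let L > 0, z ∈ [0, 1/2], γ > 0, and m ∈ ℝ with m ≤ γ + L(1 − z), and write t₊ := max(t, 0). Let P̂ denote the supremum of μ({x ∈ [0,1] : g(x) ≤ 0}) over all pairs (g, μ) where g : [0,1] → ℝ is Lipschitz with constant L and g(z) = γ, μ is a Borel probability measure on [0,1], and ∫ g dμ ≥ m. Then: (i) if z ≤ 1/4 and L(1/2 − z) < γ ≤ L(1 − 3z), then P̂ = (1 − 2 m₊/(L + (γ − L z)))₊; and (ii) if L·max{z, 1 − 3z} < γ ≤ L(1 − z), then P̂ = (1 − m₊/(L z + γ))₊. -/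
open MeasureTheory
open scoped ENNReal

lemma myIntegrableDirac (f : ℝ → ℝ) (hf : Continuous f) (a : ℝ) :
    Integrable f (Measure.dirac a) := by
  refine ⟨hf.aestronglyMeasurable, ?_⟩
  rw [HasFiniteIntegral, lintegral_dirac]
  exact ENNReal.coe_lt_top

lemma keyI (L z γ x x₀ : ℝ) (hL : 0 < L) (hz0 : 0 ≤ z)
    (hx0 : 0 ≤ x) (hx1 : x ≤ 1) (hx₀0 : 0 ≤ x₀) (hx₀1 : x₀ ≤ 1)
    (hz14 : z ≤ 1/4) (h12 : L * (1/2 - z) ≤ γ) (h13 : γ ≤ L * (1 - 3*z))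
    (hγz : L * z < γ) (habs : γ ≤ L * |x₀ - z|) :
    min (γ + L * |x - z|) (L * |x - x₀|) ≤ (L + (γ - L * z)) / 2 := by
  have hx₀z : γ ≤ L * (x₀ - z) := by
    rcases le_total z x₀ with h | h
    · rwa [abs_of_nonneg (by linarith)] at habs
    · rw [abs_of_nonpos (by linarith)] at habs
      nlinarith
  rcases le_total x z with hxz | hxz
  · rw [abs_of_nonpos (show x - z ≤ 0 by linarith)]
    refine le_trans (min_le_left _ _) ?_
    nlinarith
  · rw [abs_of_nonneg (show 0 ≤ x - z by linarith)]
    rcases le_total x x₀ with hxx | hxx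
    · rw [abs_of_nonpos (show x - x₀ ≤ 0 by linarith)]
      have h1 := min_le_left (γ + L * (x - z)) (L * -(x - x₀))
      have h2 := min_le_right (γ + L * (x - z)) (L * -(x - x₀))
      nlinarith
    · rw [abs_of_nonneg (show 0 ≤ x - x₀ by linarith)]
      refine le_trans (min_le_right _ _) ?_
      nlinarith


lemma keyII (L z γ x x₀ : ℝ) (hL : 0 < L) (hz0 : 0 ≤ z)
    (hx0 : 0 ≤ x) (hx1 : x ≤ 1) (hx₀0 : 0 ≤ x₀) (hx₀1 : x₀ ≤ 1)
    (h12 : L * (1/2 - z) ≤ γ) (h13 : L * (1 - 3*z) ≤ γ)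
    (hγz : L * z < γ) (habs : γ ≤ L * |x₀ - z|) :
    min (γ + L * |x - z|) (L * |x - x₀|) ≤ L * z + γ := by
  have hx₀z : γ ≤ L * (x₀ - z) := by
    rcases le_total z x₀ with h | h
    · rwa [abs_of_nonneg (by linarith)] at habs
    · rw [abs_of_nonpos (by linarith)] at habs
      nlinarith
  rcases le_total x z with hxz | hxz
  · rw [abs_of_nonpos (show x - z ≤ 0 by linarith)]
    refine le_trans (min_le_left _ _) ?_
    nlinarith
  · rw [abs_of_nonneg (show 0 ≤ x - z by linarith)]
    rcases le_total x x₀ with hxx | hxx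
    · rw [abs_of_nonpos (show x - x₀ ≤ 0 by linarith)]
      have h1 := min_le_left (γ + L * (x - z)) (L * -(x - x₀))
      have h2 := min_le_right (γ + L * (x - z)) (L * -(x - x₀))
      nlinarith
    · rw [abs_of_nonneg (show 0 ≤ x - x₀ by linarith)]
      refine le_trans (min_le_right _ _) ?_
      nlinarith

lemma myUpper (L z γ m M : ℝ) (hL : 0 < L) (hM : 0 < M)
    (hz0 : 0 ≤ z) (hz1 : z ≤ 1)
    (H : ∀ x x₀ : ℝ, x ∈ Set.Icc (0:ℝ) 1 → x₀ ∈ Set.Icc (0:ℝ) 1 → γ ≤ L * |x₀ - z| →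
      min (γ + L * |x - z|) (L * |x - x₀|) ≤ M) :
    PhatOneObs L z γ m ≤ ENNReal.ofReal (max (1 - max m 0 / M) 0) := by
  rw [PhatOneObs]
  apply iSup_le
  rintro ⟨⟨g, μ⟩, hprob, hsupp, hlip, hgz, hint⟩
  dsimp only
  by_cases hm : m ≤ 0
  · rw [max_eq_right hm]
    simp only [zero_div, sub_zero]
    rw [max_eq_left (by norm_num : (0:ℝ) ≤ 1)]
    simpa using prob_le_one (μ := μ) (s := _)
  · push_neg at hm
    rw [max_eq_left hm.le]
    set S := {x ∈ Set.Icc (0:ℝ) 1 | g x ≤ 0} with hSdef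
    by_cases hS : S = ∅
    · rw [hS]
      simp
    · obtain ⟨x₀, hx₀I, hgx₀⟩ := Set.nonempty_iff_ne_empty.mpr hS
      have hzI : z ∈ Set.Icc (0:ℝ) 1 := ⟨hz0, hz1⟩
      have hγx₀ : γ ≤ L * |x₀ - z| := by
        have h1 := hlip z hzI x₀ hx₀I
        rw [hgz] at h1
        have h2 := (abs_le.mp h1).2
        rw [abs_sub_comm z x₀] at h2
        linarith
      have hb : ∀ x ∈ Set.Icc (0:ℝ) 1, g x ≤ M := by
        intro x hx
        have h1 := (abs_le.mp (hlip x hx z hzI)).2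
        rw [hgz] at h1
        have h2 := (abs_le.mp (hlip x hx x₀ hx₀I)).2
        have h3 := H x x₀ hx hx₀I hγx₀
        have h4 : g x ≤ min (γ + L * |x - z|) (L * |x - x₀|) :=
          le_min (by linarith) (by linarith)
        linarith
      -- measurability of S
      have hcont : ContinuousOn g (Set.Icc (0:ℝ) 1) := by
        apply LipschitzOnWith.continuousOn (K := L.toNNReal)
        apply LipschitzOnWith.of_dist_le_mul
        intro a ha b hb'
        rw [Real.dist_eq, Real.dist_eq, Real.coe_toNNReal L hL.le]
        exact hlip a ha b hb'
      have hSclosed : IsClosed S := by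
        have : S = Set.Icc (0:ℝ) 1 ∩ g ⁻¹' Set.Iic 0 := by
          ext x; simp [hSdef, Set.mem_sep_iff, and_comm]
        rw [this]
        exact hcont.preimage_isClosed_of_isClosed isClosed_Icc isClosed_Iic
      have hSm : MeasurableSet S := hSclosed.measurableSet
      have hgint : Integrable g μ := by
        by_contra hni
        rw [integral_undef hni] at hint
        linarith
      set h : ℝ → ℝ := Set.indicator Sᶜ (fun _ => M) with hhdef
      have hhint : Integrable h μ := (integrable_const M).indicator hSm.compl
      have hae : ∀ᵐ x ∂μ, x ∈ Set.Icc (0:ℝ) 1 := by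
        rw [ae_iff]
        simpa [Set.compl_def] using hsupp
      have hgh : g ≤ᵐ[μ] h := by
        filter_upwards [hae] with x hx
        by_cases hxS : x ∈ S
        · have : h x = 0 := Set.indicator_of_notMem (by simpa using hxS) _
          rw [this]
          exact hxS.2
        · have : h x = M := Set.indicator_of_mem (by simpa using hxS) _
          rw [this]
          exact hb x hx
      have hint2 : m ≤ (μ Sᶜ).toReal * M := by
        calc m ≤ ∫ x, g x ∂μ := hint
        _ ≤ ∫ x, h x ∂μ := integral_mono_ae hgint hhint hgh
        _ = (μ Sᶜ).toReal * M := by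
            rw [hhdef, integral_indicator_const _ hSm.compl, smul_eq_mul]
            rfl
      have hStop : μ S ≠ ⊤ := (measure_ne_top μ S)
      have hcompl : (μ Sᶜ).toReal = 1 - (μ S).toReal := by
        rw [measure_compl hSm hStop, measure_univ]
        rw [ENNReal.toReal_sub_of_le prob_le_one ENNReal.one_ne_top]
        simp
      rw [hcompl] at hint2
      have hp : (μ S).toReal ≤ 1 - m / M := by
        have : m / M ≤ 1 - (μ S).toReal := (div_le_iff₀ hM).mpr (by linarith)
        linarith
      calc μ S = ENNReal.ofReal ((μ S).toReal) := (ENNReal.ofReal_toReal hStop).symm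
      _ ≤ ENNReal.ofReal (max (1 - m / M) 0) :=
          ENNReal.ofReal_le_ofReal (le_max_of_le_left hp)

lemma myLower (L z γ m M c : ℝ) (hL : 0 < L) (hγ : 0 < γ)
    (hM : 0 < M) (hc0 : 0 ≤ c) (hc1 : c ≤ 1) (hc : c ≠ 1)
    (hγ1 : γ ≤ L * (1 - z))
    (hgc : min (γ + L * |c - z|) (L * (1 - c)) = M) :
    ENNReal.ofReal (max (1 - max m 0 / M) 0) ≤ PhatOneObs L z γ m := by
  by_cases hpm : 1 - max m 0 / M ≤ 0
  · rw [max_eq_right hpm]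
    simp
  · push_neg at hpm
    rw [max_eq_left hpm.le]
    set p := 1 - max m 0 / M with hpdef
    have hp0 : 0 ≤ p := hpm.le
    have hp1 : p ≤ 1 := by
      have h0 : 0 ≤ max m 0 / M := div_nonneg (le_max_right m 0) hM.le
      rw [hpdef]
      linarith
    have hmean : m ≤ (1 - p) * M := by
      have h1 : (1 - p) * M = max m 0 := by
        rw [hpdef]
        field_simp
        ring
      rw [h1]
      exact le_max_left m 0
    set g : ℝ → ℝ := fun x => min (γ + L * |x - z|) (L * (1 - x)) with hgdef
    have hgcont : Continuous g := by
      apply Continuous.min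
      · exact continuous_const.add (continuous_const.mul ((continuous_id.sub continuous_const).abs))
      · exact continuous_const.mul (continuous_const.sub continuous_id)
    set μ : Measure ℝ := ENNReal.ofReal p • Measure.dirac 1
        + ENNReal.ofReal (1 - p) • Measure.dirac c with hμdef
    have hprob : IsProbabilityMeasure μ := by
      constructor
      rw [hμdef]
      simp only [Measure.add_apply, Measure.smul_apply, measure_univ, smul_eq_mul, mul_one]
      rw [← ENNReal.ofReal_add hp0 (by linarith)]
      norm_num
    have hsupp : μ (Set.Icc (0:ℝ) 1)ᶜ = 0 := by
      rw [hμdef]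
      simp only [Measure.add_apply, Measure.smul_apply, smul_eq_mul]
      rw [Measure.dirac_apply' _ measurableSet_Icc.compl, Measure.dirac_apply' _ measurableSet_Icc.compl]
      rw [Set.indicator_of_notMem (by simp : (1:ℝ) ∉ (Set.Icc (0:ℝ) 1)ᶜ)]
      rw [Set.indicator_of_notMem (by simp [hc0, hc1] : c ∉ (Set.Icc (0:ℝ) 1)ᶜ)]
      simp
    have hlip : ∀ x ∈ Set.Icc (0:ℝ) 1, ∀ x' ∈ Set.Icc (0:ℝ) 1, |g x - g x'| ≤ L * |x - x'| := by
      intro x _ x' _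
      rw [hgdef]
      refine le_trans (abs_min_sub_min_le_max _ _ _ _) (max_le ?_ ?_)
      · rw [add_sub_add_left_eq_sub, ← mul_sub, abs_mul, abs_of_pos hL]
        refine mul_le_mul_of_nonneg_left ?_ hL.le
        have e := abs_abs_sub_abs_le_abs_sub (x - z) (x' - z)
        have e2 : x - z - (x' - z) = x - x' := by ring
        rwa [e2] at e
      · rw [← mul_sub, abs_mul, abs_of_pos hL]
        have : (1 - x) - (1 - x') = -(x - x') := by ring
        rw [this, abs_neg]
    have hgz : g z = γ := by
      rw [hgdef]
      simp only [sub_self, abs_zero, mul_zero, add_zero]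
      exact min_eq_left hγ1
    have hg1 : g 1 = 0 := by
      rw [hgdef]
      simp only []
      have : L * (1 - 1) = 0 := by ring
      rw [this]
      exact min_eq_right (by positivity)
    have hgcM : g c = M := hgc
    have hint_dirac1 : Integrable g (Measure.dirac 1) := myIntegrableDirac g hgcont 1
    have hint_diracc : Integrable g (Measure.dirac c) := myIntegrableDirac g hgcont c
    have hintegral : ∫ x, g x ∂μ = p * g 1 + (1 - p) * g c := by
      rw [hμdef, integral_add_measure (hint_dirac1.smul_measure ENNReal.ofReal_ne_top)
        (hint_diracc.smul_measure ENNReal.ofReal_ne_top),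
        integral_smul_measure, integral_smul_measure, integral_dirac, integral_dirac,
        ENNReal.toReal_ofReal hp0, ENNReal.toReal_ofReal (by linarith : (0:ℝ) ≤ 1 - p)]
      simp [smul_eq_mul]
    have hint : m ≤ ∫ x, g x ∂μ := by
      rw [hintegral, hg1, hgcM]
      linarith [hmean]
    have hSet : {x ∈ Set.Icc (0:ℝ) 1 | g x ≤ 0} = {1} := by
      ext x
      simp only [Set.mem_setOf_eq, Set.mem_Icc, Set.mem_singleton_iff]
      constructor
      · rintro ⟨⟨hx0, hx1⟩, hgx⟩
        rw [hgdef] at hgx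
        simp only [min_le_iff] at hgx
        rcases hgx with h | h
        · exfalso
          have : 0 ≤ L * |x - z| := by positivity
          linarith
        · have : 1 ≤ x := by nlinarith
          linarith [le_antisymm hx1 this]
          -- x = 1
      · rintro rfl
        exact ⟨⟨by norm_num, le_refl 1⟩, le_of_eq hg1⟩
    have hμS : μ {x ∈ Set.Icc (0:ℝ) 1 | g x ≤ 0} = ENNReal.ofReal p := by
      rw [hSet, hμdef]
      simp only [Measure.add_apply, Measure.smul_apply, smul_eq_mul]
      rw [Measure.dirac_apply' _ (measurableSet_singleton 1),
        Measure.dirac_apply' _ (measurableSet_singleton 1)]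
      rw [Set.indicator_of_mem (by simp : (1:ℝ) ∈ ({1} : Set ℝ))]
      rw [Set.indicator_of_notMem (by simpa using hc)]
      simp
    rw [← hμS]
    exact le_iSup (fun q : {p : (ℝ → ℝ) × Measure ℝ //
        IsProbabilityMeasure p.2 ∧ p.2 (Set.Icc (0 : ℝ) 1)ᶜ = 0 ∧
        (∀ x ∈ Set.Icc (0 : ℝ) 1, ∀ x' ∈ Set.Icc (0 : ℝ) 1,
          |p.1 x - p.1 x'| ≤ L * |x - x'|) ∧
        p.1 z = γ ∧ m ≤ ∫ x, p.1 x ∂p.2} =>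
        q.val.2 {x ∈ Set.Icc (0 : ℝ) 1 | q.val.1 x ≤ 0})
      ⟨⟨g, μ⟩, hprob, hsupp, hlip, hgz, hint⟩

/-- Middle cases of the one-data-point example: for `L > 0`,
`z ∈ [0, 1/2]`, `γ > 0`, `m ≤ γ + L(1 − z)`:
(i) if `z ≤ 1/4` and `L(1/2 − z) < γ ≤ L(1 − 3z)` then
    `P̂ = (1 − 2 m₊/(L + (γ − L z)))₊`;
(ii) if `L·max{z, 1 − 3z} < γ ≤ L(1 − z)` then `P̂ = (1 − m₊/(L z + γ))₊`. -/
theorem Phat_one_obs_cases_middle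
    (L z γ m : ℝ) (hL : 0 < L) (hz : z ∈ Set.Icc (0 : ℝ) (1 / 2))
    (hγ : 0 < γ) (hm : m ≤ γ + L * (1 - z)) :
    (z ≤ 1 / 4 → L * (1 / 2 - z) < γ → γ ≤ L * (1 - 3 * z) →
      PhatOneObs L z γ m = ENNReal.ofReal (max (1 - 2 * max m 0 / (L + (γ - L * z))) 0)) ∧
    (L * max z (1 - 3 * z) < γ → γ ≤ L * (1 - z) →
      PhatOneObs L z γ m = ENNReal.ofReal (max (1 - max m 0 / (L * z + γ)) 0)) := by
  obtain ⟨hz0, hz12⟩ := hz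
  constructor
  · -- case (i)
    intro hz14 h1 h2
    set M : ℝ := (L + (γ - L * z)) / 2 with hMdef
    have hM : 0 < M := by rw [hMdef]; nlinarith
    have hγz : L * z < γ :=
      lt_of_le_of_lt (mul_le_mul_of_nonneg_left (by linarith : z ≤ 1/2 - z) hL.le) h1
    have hγdiv : γ / L ≤ 1 - z := by
      rw [div_le_iff₀ hL]; nlinarith
    have hγdivpos : 0 < γ / L := div_pos hγ hL
    have hγ1 : γ ≤ L * (1 - z) := by
      have := (div_le_iff₀ hL).mp hγdiv
      linarith
    have hrw : 1 - 2 * max m 0 / (L + (γ - L * z)) = 1 - max m 0 / M := by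
      rw [hMdef, div_div_eq_mul_div]
      ring
    rw [hrw]
    apply le_antisymm
    · apply myUpper L z γ m M hL hM hz0 (by linarith)
      intro x x₀ hx hx₀ habs
      rw [hMdef]
      exact keyI L z γ x x₀ hL hz0 hx.1 hx.2 hx₀.1 hx₀.2 hz14 h1.le h2 hγz habs
    · set c : ℝ := (1 + z - γ / L) / 2 with hcdef
      have hc0 : 0 ≤ c := by rw [hcdef]; linarith
      have hc1' : c < 1 := by rw [hcdef]; linarith
      have hcz : 0 ≤ c - z := by rw [hcdef]; linarith
      have hgc : min (γ + L * |c - z|) (L * (1 - c)) = M := by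
        rw [abs_of_nonneg hcz]
        have e1 : γ + L * (c - z) = M := by
          rw [hcdef, hMdef]
          field_simp
          ring
        have e2 : L * (1 - c) = M := by
          rw [hcdef, hMdef]
          field_simp
          ring
        rw [e1, e2, min_self]
      exact myLower L z γ m M c hL hγ hM hc0 hc1'.le (ne_of_lt hc1') hγ1 hgc
  · -- case (ii)
    intro h1 h2
    set M : ℝ := L * z + γ with hMdef
    have hM : 0 < M := by rw [hMdef]; nlinarith
    have hγz : L * z < γ :=
      lt_of_le_of_lt (mul_le_mul_of_nonneg_left (le_max_left _ _) hL.le) h1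
    have h13 : L * (1 - 3 * z) ≤ γ :=
      (lt_of_le_of_lt (mul_le_mul_of_nonneg_left (le_max_right _ _) hL.le) h1).le
    have h12 : L * (1 / 2 - z) ≤ γ := by
      have hmax : 1 / 2 - z ≤ max z (1 - 3 * z) := by
        rcases le_total z (1/4) with h | h
        · exact le_trans (by linarith) (le_max_right _ _)
        · exact le_trans (by linarith) (le_max_left _ _)
      exact (lt_of_le_of_lt (mul_le_mul_of_nonneg_left hmax hL.le) h1).le
    apply le_antisymm
    · apply myUpper L z γ m M hL hM hz0 (by linarith)
      intro x x₀ hx hx₀ habs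
      rw [hMdef]
      exact keyII L z γ x x₀ hL hz0 hx.1 hx.2 hx₀.1 hx₀.2 h12 h13 hγz habs
    · have hgc : min (γ + L * |(0:ℝ) - z|) (L * (1 - 0)) = M := by
        rw [zero_sub, abs_neg, abs_of_nonneg hz0, hMdef]
        rw [min_eq_left (by nlinarith)]
        ring
      exact myLower L z γ m M 0 hL hγ hM le_rfl (by norm_num) (by norm_num) h2 hgc
end

section
/- Let V ⊆ X, O ⊆ X, z_0 ∈ X, and let G be a real-valued function defined on O ∪ {z_0}. Suppose p ∈ X is between V and z_0, i.e. d_L(x, z_0) = d_L(x, p) + d_L(p, z_0) for every x ∈ V, and suppose there exist z', z'' ∈ O ∩ V with G(z') + d_L(z', p) ≤ G(z_0) + d_L(z_0, p) and G(z'') − d_L(z'', p) ≥ G(z_0) − d_L(z_0, p). Then z_0 is redundant on V with respect to O ∩ V: every (x, y) ∈ V × ℝ satisfying |y − G(z)| ≤ d_L(x, z) for all z ∈ O ∩ V also satisfies |y − G(z_0)| ≤ d_L(x, z_0). -/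
private lemma sum_tri {K : ℕ} {X : Fin K → Type*} [∀ k, MetricSpace (X k)]
    (L : Fin K → ℝ) (hL : ∀ k, 0 ≤ L k) (a b c : ∀ k, X k) :
    (∑ k, L k * dist (a k) (c k)) ≤
      (∑ k, L k * dist (a k) (b k)) + (∑ k, L k * dist (b k) (c k)) := by
  rw [← Finset.sum_add_distrib]
  refine Finset.sum_le_sum fun k _ => ?_
  rw [← mul_add]
  exact mul_le_mul_of_nonneg_left (dist_triangle _ _ _) (hL k)

/-- Redundant data points.  Let `V, O ⊆ X`, `z₀ ∈ X`, and let `G` be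
real-valued on `O ∪ {z₀}`.  Suppose `p ∈ X` is between `V` and `z₀`
(`d_L(x, z₀) = d_L(x, p) + d_L(p, z₀)` for all `x ∈ V`), and there exist
`z', z'' ∈ O ∩ V` with `G z' + d_L(z', p) ≤ G z₀ + d_L(z₀, p)` and
`G z'' − d_L(z'', p) ≥ G z₀ − d_L(z₀, p)`.  Then `z₀` is redundant on `V` with respect
to `O ∩ V`: every `(x, y) ∈ V × ℝ` with `|y − G z| ≤ d_L(x, z)` for all `z ∈ O ∩ V`
also satisfies `|y − G z₀| ≤ d_L(x, z₀)`. -/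
theorem redundant_data_point
    {K : ℕ} {X : Fin K → Type*} [∀ k, MetricSpace (X k)]
    (L : Fin K → ℝ) (hL : ∀ k, 0 ≤ L k)
    (V O : Set (∀ k, X k)) (z₀ : ∀ k, X k) (G : (∀ k, X k) → ℝ)
    (p : ∀ k, X k)
    (hbetween : ∀ x ∈ V, (∑ k, L k * dist (x k) (z₀ k)) =
      (∑ k, L k * dist (x k) (p k)) + (∑ k, L k * dist (p k) (z₀ k)))
    (hz' : ∃ z' ∈ O ∩ V,
      G z' + (∑ k, L k * dist (z' k) (p k)) ≤ G z₀ + (∑ k, L k * dist (z₀ k) (p k)))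
    (hz'' : ∃ z'' ∈ O ∩ V,
      G z₀ - (∑ k, L k * dist (z₀ k) (p k)) ≤ G z'' - (∑ k, L k * dist (z'' k) (p k))) :
    ∀ x ∈ V, ∀ y : ℝ,
      (∀ z ∈ O ∩ V, |y - G z| ≤ ∑ k, L k * dist (x k) (z k)) →
      |y - G z₀| ≤ ∑ k, L k * dist (x k) (z₀ k) := by
  intro x hx y hy
  obtain ⟨z', hz'mem, hz'le⟩ := hz'
  obtain ⟨z'', hz''mem, hz''le⟩ := hz''
  have h1 := hy z' hz'mem
  have h2 := hy z'' hz''mem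
  have t1 := sum_tri L hL x p z'
  have t2 := sum_tri L hL x p z''
  have c1 : (∑ k, L k * dist (p k) (z' k)) = ∑ k, L k * dist (z' k) (p k) := by
    simp [dist_comm]
  have c2 : (∑ k, L k * dist (p k) (z'' k)) = ∑ k, L k * dist (z'' k) (p k) := by
    simp [dist_comm]
  have c3 : (∑ k, L k * dist (p k) (z₀ k)) = ∑ k, L k * dist (z₀ k) (p k) := by
    simp [dist_comm]
  rw [hbetween x hx, c3]
  rw [abs_le] at h1 h2 ⊢
  constructor
  · nlinarith [h2.1, t2, c2]
  · nlinarith [h1.2, t1, c1]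
end

section
/- Let O ⊆ X be nonempty and let G : O → ℝ satisfy |G(z) − G(z')| ≤ d_L(z, z') for all z, z' ∈ O. Define the set-valued map G̃ : X → (subsets of ℝ) by G̃(x) := { g(x) : g ∈ E(X, G|_O, d_L) }. Then G̃ is a set-valued Lipschitz function with constant 1 with respect to d_L: for all x, x' ∈ X and every y ∈ G̃(x), inf_{y' ∈ G̃(x')} |y − y'| ≤ d_L(x, x'); equivalently, the Hausdorff distance between G̃(x) and G̃(x') is at most d_L(x, x'). -/
/-- The set-valued map of feasible values is set-valued Lipschitz with
constant `1` for `d_L`.  Let `O ⊆ X` be nonempty and let `G : O → ℝ` satisfy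
`|G z − G z'| ≤ d_L(z, z')` on `O`.  Define `G̃ x := { g x : g ∈ E(X, G|_O, d_L) }`.
Then for all `x, x' ∈ X` and every `y ∈ G̃ x`,
`inf_{y' ∈ G̃ x'} |y − y'| ≤ d_L(x, x')`; equivalently, the Hausdorff distance between
`G̃ x` and `G̃ x'` is at most `d_L(x, x')`. -/
theorem feasible_set_valued_lipschitz
    {K : ℕ} {X : Fin K → Type*} [∀ k, MetricSpace (X k)]
    (L : Fin K → ℝ) (hL : ∀ k, 0 ≤ L k)
    (O : Set (∀ k, X k)) (hO : O.Nonempty) (G : (∀ k, X k) → ℝ)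
    (hG : ∀ z ∈ O, ∀ z' ∈ O, |G z - G z'| ≤ ∑ k, L k * dist (z k) (z' k))
    (Gt : (∀ k, X k) → Set ℝ)
    (hGt : Gt = fun x => {y : ℝ | ∃ g : (∀ k, X k) → ℝ,
      (∀ w w' : ∀ k, X k, |g w - g w'| ≤ ∑ k, L k * dist (w k) (w' k)) ∧
      (∀ z ∈ O, g z = G z) ∧ y = g x}) :
    ∀ x x' : ∀ k, X k,
      (∀ y ∈ Gt x,
        sInf {d : ℝ | ∃ y' ∈ Gt x', d = |y - y'|} ≤ ∑ k, L k * dist (x k) (x' k)) ∧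
      Metric.hausdorffDist (Gt x) (Gt x') ≤ ∑ k, L k * dist (x k) (x' k) := by
  subst hGt
  have hD : ∀ x x' : ∀ k, X k, 0 ≤ ∑ k, L k * dist (x k) (x' k) := fun x x' =>
    Finset.sum_nonneg fun k _ => mul_nonneg (hL k) dist_nonneg
  -- key: transfer a point across
  have key : ∀ x x' : ∀ k, X k, ∀ y ∈ (fun x => {y : ℝ | ∃ g : (∀ k, X k) → ℝ,
      (∀ w w' : ∀ k, X k, |g w - g w'| ≤ ∑ k, L k * dist (w k) (w' k)) ∧
      (∀ z ∈ O, g z = G z) ∧ y = g x}) x,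
      ∃ y' ∈ (fun x => {y : ℝ | ∃ g : (∀ k, X k) → ℝ,
      (∀ w w' : ∀ k, X k, |g w - g w'| ≤ ∑ k, L k * dist (w k) (w' k)) ∧
      (∀ z ∈ O, g z = G z) ∧ y = g x}) x',
      |y - y'| ≤ ∑ k, L k * dist (x k) (x' k) := by
    rintro x x' y ⟨g, hg1, hg2, rfl⟩
    exact ⟨g x', ⟨g, hg1, hg2, rfl⟩, hg1 x x'⟩
  intro x x'
  constructor
  · intro y hy
    obtain ⟨y', hy', hle⟩ := key x x' y hy
    refine le_trans (csInf_le ⟨0, ?_⟩ ⟨y', hy', rfl⟩) hle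
    rintro d ⟨y'', _, rfl⟩
    exact abs_nonneg _
  · apply Metric.hausdorffDist_le_of_mem_dist (hD x x')
    · intro y hy
      obtain ⟨y', hy', hle⟩ := key x x' y hy
      exact ⟨y', hy', by simpa [Real.dist_eq] using hle⟩
    · intro y hy
      obtain ⟨y', hy', hle⟩ := key x' x y hy
      refine ⟨y', hy', ?_⟩
      rw [dist_comm]
      simpa [Real.dist_eq, Finset.mul_sum, dist_comm] using hle
end
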